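/- Let h > 0, d ∈ ℕ, and let L : ℝ^d × ℝ^d → ℝ be C¹ such that D₁L is Lipschitz with constant L₁ and D₂L is Lipschitz with constant L₂ (with respect to the norm |(x,y)| = |x| + |y| on ℝ^d × ℝ^d). Let q̃, q̄ : [0,h] → ℝ^d be C¹ curves such that t ↦ D₂L(q̃(t),q̃'(t)) and t ↦ D₂L(q̄(t),q̄'(t)) are differentiable with |(d/dt) D₂L(q̃(t),q̃'(t)) − (d/dt) D₂L(q̄(t),q̄'(t))| ≤ L₃ ( |q̃(t) − q̄(t)| + |q̃'(t) − q̄'(t)| ) for all t ∈ [0,h]. Let φ₁ : [0,h] → ℝ be C¹ and define Δ : [0,h] → ℝ^d by Δ(t) = ( D₁L(q̃(t),q̃'(t)) − D₁L(q̄(t),q̄'(t)) )·φ₁(t) + ( D₂L(q̃(t),q̃'(t)) − D₂L(q̄(t),q̄'(t)) )·φ₁'(t). Let a quadrature rule with nodes c_j ∈ [0,1] and weights b_j satisfy |h·Σ_{j=1}^m b_j Δ(c_j h) − ∫₀ʰ Δ(t) dt| ≤ η with η ≤ ‖q̃ − q̄‖_{1,1}. Then for every a ∈ ℝ^d, | (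 h·Σ_{j=1}^m b_j Δ(c_j h) )ᵀ a | ≤ C · |a| · ( ‖q̃ − q̄‖_{1,1} + ‖q̃ − q̄‖_∞ + ‖q̃' − q̄'‖_∞ ), where C = max(L₁ + L₃, 2L₂)·‖φ₁‖_∞ + 1. -/

import Mathlib

open scoped BigOperators

set_option maxHeartbeats 1000000

/-- **Bound on the difference of the Galerkin Noether map evaluated on the Galerkin
curve `q̃` and on the exact Euler–Lagrange solution `q̄`.**  Here
`Δ(t) = (D₁L(q̃,q̃') − D₁L(q̄,q̄'))·φ₁(t) + (D₂L(q̃,q̃') − D₂L(q̄,q̄'))·φ₁'(t)` is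
covector-valued, `p̃, p̄` are the momenta along the two curves, `η` bounds the
quadrature error on `Δ` and is itself bounded by the `W^{1,1}` norm of `q̃ − q̄`,
and `C = max(L₁ + L₃, 2L₂)·‖φ₁‖_∞ + 1`. -/
theorem galerkin_noether_map_difference_bound
    (h : ℝ) (hh : 0 < h) (d : ℕ)
    (L : EuclideanSpace ℝ (Fin d) → EuclideanSpace ℝ (Fin d) → ℝ)
    (hL : ContDiff ℝ 1 fun p : EuclideanSpace ℝ (Fin d) × EuclideanSpace ℝ (Fin d) =>
      L p.1 p.2)
    (L₁ L₂ L₃ : ℝ)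
    (hD1Lip : ∀ x y x' y' : EuclideanSpace ℝ (Fin d),
      ‖fderiv ℝ (fun u => L u y) x - fderiv ℝ (fun u => L u y') x'‖ ≤
        L₁ * (‖x - x'‖ + ‖y - y'‖))
    (hD2Lip : ∀ x y x' y' : EuclideanSpace ℝ (Fin d),
      ‖fderiv ℝ (fun v => L x v) y - fderiv ℝ (fun v => L x' v) y'‖ ≤
        L₂ * (‖x - x'‖ + ‖y - y'‖))
    (qtil qbar : ℝ → EuclideanSpace ℝ (Fin d))
    (hqtil : ContDiff ℝ 1 qtil) (hqbar : ContDiff ℝ 1 qbar)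
    (ptil pbar : ℝ → EuclideanSpace ℝ (Fin d) →L[ℝ] ℝ)
    (hptil : ∀ t, ptil t = fderiv ℝ (fun v => L (qtil t) v) (deriv qtil t))
    (hpbar : ∀ t, pbar t = fderiv ℝ (fun v => L (qbar t) v) (deriv qbar t))
    (hptilDiff : ∀ t ∈ Set.Icc (0 : ℝ) h, DifferentiableAt ℝ ptil t)
    (hpbarDiff : ∀ t ∈ Set.Icc (0 : ℝ) h, DifferentiableAt ℝ pbar t)
    (hD3Lip : ∀ t ∈ Set.Icc (0 : ℝ) h,
      ‖deriv ptil t - deriv pbar t‖ ≤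
        L₃ * (‖qtil t - qbar t‖ + ‖deriv qtil t - deriv qbar t‖))
    (φ₁ : ℝ → ℝ) (hφ₁ : ContDiff ℝ 1 φ₁)
    (Δ : ℝ → EuclideanSpace ℝ (Fin d) →L[ℝ] ℝ)
    (hΔ : ∀ t, Δ t =
      φ₁ t • (fderiv ℝ (fun u => L u (deriv qtil t)) (qtil t) -
          fderiv ℝ (fun u => L u (deriv qbar t)) (qbar t)) +
        deriv φ₁ t • (ptil t - pbar t))
    (m : ℕ) (c b : Fin m → ℝ) (hc : ∀ j, c j ∈ Set.Icc (0 : ℝ) 1)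
    (η : ℝ)
    (hη : ‖(h • ∑ j, b j • Δ (c j * h)) - ∫ t in (0 : ℝ)..h, Δ t‖ ≤ η)
    (hηN : η ≤ (∫ t in (0 : ℝ)..h, ‖qtil t - qbar t‖) +
      ∫ t in (0 : ℝ)..h, ‖deriv qtil t - deriv qbar t‖) :
    ∀ a : EuclideanSpace ℝ (Fin d),
      |(h • ∑ j, b j • Δ (c j * h)) a| ≤
        (max (L₁ + L₃) (2 * L₂) * sSup ((fun t => |φ₁ t|) '' Set.Icc (0 : ℝ) h) + 1) *
          ‖a‖ *
          (((∫ t in (0 : ℝ)..h, ‖qtil t - qbar t‖) +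
              ∫ t in (0 : ℝ)..h, ‖deriv qtil t - deriv qbar t‖) +
            sSup ((fun t => ‖qtil t - qbar t‖) '' Set.Icc (0 : ℝ) h) +
            sSup ((fun t => ‖deriv qtil t - deriv qbar t‖) '' Set.Icc (0 : ℝ) h)) := by
  intro a
  have h0h : (0 : ℝ) ≤ h := hh.le
  set M := sSup ((fun t => |φ₁ t|) '' Set.Icc (0 : ℝ) h) with hMdef
  set S1 := sSup ((fun t => ‖qtil t - qbar t‖) '' Set.Icc (0 : ℝ) h) with hS1def
  set S2 := sSup ((fun t => ‖deriv qtil t - deriv qbar t‖) '' Set.Icc (0 : ℝ) h) with hS2def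
  set W1 := (∫ t in (0 : ℝ)..h, ‖qtil t - qbar t‖) with hW1def
  set W2 := (∫ t in (0 : ℝ)..h, ‖deriv qtil t - deriv qbar t‖) with hW2def
  set K := max (L₁ + L₃) (2 * L₂) with hKdef
  -- trivial case `d = 0`
  rcases Nat.eq_zero_or_pos d with hd | hd
  · subst hd
    have ha : a = 0 := Subsingleton.elim a 0
    simp [ha]
  -- continuity facts
  have hq1 : Continuous (deriv qtil) := hqtil.continuous_deriv le_rfl
  have hq2 : Continuous (deriv qbar) := hqbar.continuous_deriv le_rfl
  have hφc : Continuous φ₁ := hφ₁.continuous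
  have hφ'c : Continuous (deriv φ₁) := hφ₁.continuous_deriv le_rfl
  have hLd : Differentiable ℝ (fun p : EuclideanSpace ℝ (Fin d) × EuclideanSpace ℝ (Fin d) => L p.1 p.2) :=
    hL.differentiable one_ne_zero
  have hfd_cont : Continuous (fderiv ℝ (fun p : EuclideanSpace ℝ (Fin d) × EuclideanSpace ℝ (Fin d) => L p.1 p.2)) :=
    hL.continuous_fderiv one_ne_zero
  have key1 : ∀ x y : EuclideanSpace ℝ (Fin d), fderiv ℝ (fun u => L u y) x =
      (fderiv ℝ (fun p : EuclideanSpace ℝ (Fin d) × EuclideanSpace ℝ (Fin d) => L p.1 p.2) (x, y)).comp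
        (ContinuousLinearMap.inl ℝ _ _) := by
    intro x y
    exact ((hLd (x, y)).hasFDerivAt.comp x (hasFDerivAt_prodMk_left (𝕜 := ℝ) x y)).fderiv
  have key2 : ∀ x y : EuclideanSpace ℝ (Fin d), fderiv ℝ (fun v => L x v) y =
      (fderiv ℝ (fun p : EuclideanSpace ℝ (Fin d) × EuclideanSpace ℝ (Fin d) => L p.1 p.2) (x, y)).comp
        (ContinuousLinearMap.inr ℝ _ _) := by
    intro x y
    exact ((hLd (x, y)).hasFDerivAt.comp y (hasFDerivAt_prodMk_right (𝕜 := ℝ) x y)).fderiv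
  have hptil_cont : Continuous ptil := by
    have e : ptil = fun t =>
        (fderiv ℝ (fun p : EuclideanSpace ℝ (Fin d) × EuclideanSpace ℝ (Fin d) => L p.1 p.2)
          (qtil t, deriv qtil t)).comp (ContinuousLinearMap.inr ℝ _ _) :=
      funext fun t => by rw [hptil t, key2]
    rw [e]
    exact (hfd_cont.comp (hqtil.continuous.prodMk hq1)).clm_comp continuous_const
  have hpbar_cont : Continuous pbar := by
    have e : pbar = fun t =>
        (fderiv ℝ (fun p : EuclideanSpace ℝ (Fin d) × EuclideanSpace ℝ (Fin d) => L p.1 p.2)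
          (qbar t, deriv qbar t)).comp (ContinuousLinearMap.inr ℝ _ _) :=
      funext fun t => by rw [hpbar t, key2]
    rw [e]
    exact (hfd_cont.comp (hqbar.continuous.prodMk hq2)).clm_comp continuous_const
  have hA_cont : Continuous (fun t => fderiv ℝ (fun u => L u (deriv qtil t)) (qtil t) -
      fderiv ℝ (fun u => L u (deriv qbar t)) (qbar t)) := by
    have e : (fun t => fderiv ℝ (fun u => L u (deriv qtil t)) (qtil t) -
        fderiv ℝ (fun u => L u (deriv qbar t)) (qbar t)) = fun t =>
        (fderiv ℝ (fun p : EuclideanSpace ℝ (Fin d) × EuclideanSpace ℝ (Fin d) => L p.1 p.2)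
          (qtil t, deriv qtil t)).comp (ContinuousLinearMap.inl ℝ _ _) -
        (fderiv ℝ (fun p : EuclideanSpace ℝ (Fin d) × EuclideanSpace ℝ (Fin d) => L p.1 p.2)
          (qbar t, deriv qbar t)).comp (ContinuousLinearMap.inl ℝ _ _) :=
      funext fun t => by rw [key1, key1]
    rw [e]
    exact ((hfd_cont.comp (hqtil.continuous.prodMk hq1)).clm_comp continuous_const).sub
      ((hfd_cont.comp (hqbar.continuous.prodMk hq2)).clm_comp continuous_const)
  -- sup bounds
  have hMbd : BddAbove ((fun t => |φ₁ t|) '' Set.Icc (0 : ℝ) h) :=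
    isCompact_Icc.bddAbove_image hφc.abs.continuousOn
  have hφle : ∀ t ∈ Set.Icc (0 : ℝ) h, |φ₁ t| ≤ M := fun t ht => le_csSup hMbd ⟨t, ht, rfl⟩
  have hM0 : 0 ≤ M := le_trans (abs_nonneg _) (hφle 0 ⟨le_rfl, h0h⟩)
  have hS1bd : BddAbove ((fun t => ‖qtil t - qbar t‖) '' Set.Icc (0 : ℝ) h) :=
    isCompact_Icc.bddAbove_image ((hqtil.continuous.sub hqbar.continuous).norm.continuousOn)
  have hS1le : ∀ t ∈ Set.Icc (0 : ℝ) h, ‖qtil t - qbar t‖ ≤ S1 := fun t ht => le_csSup hS1bd ⟨t, ht, rfl⟩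
  have hS10 : 0 ≤ S1 := le_trans (norm_nonneg _) (hS1le 0 ⟨le_rfl, h0h⟩)
  have hS2bd : BddAbove ((fun t => ‖deriv qtil t - deriv qbar t‖) '' Set.Icc (0 : ℝ) h) :=
    isCompact_Icc.bddAbove_image ((hq1.sub hq2).norm.continuousOn)
  have hS2le : ∀ t ∈ Set.Icc (0 : ℝ) h, ‖deriv qtil t - deriv qbar t‖ ≤ S2 := fun t ht => le_csSup hS2bd ⟨t, ht, rfl⟩
  have hS20 : 0 ≤ S2 := le_trans (norm_nonneg _) (hS2le 0 ⟨le_rfl, h0h⟩)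
  have hW10 : 0 ≤ W1 := intervalIntegral.integral_nonneg h0h fun t _ => norm_nonneg _
  have hW20 : 0 ≤ W2 := intervalIntegral.integral_nonneg h0h fun t _ => norm_nonneg _
  -- `L₂ ≥ 0` (uses `d ≥ 1`)
  have hL₂0 : 0 ≤ L₂ := by
    have hx : ‖(0 : EuclideanSpace ℝ (Fin d)) - EuclideanSpace.single (⟨0, hd⟩ : Fin d) (1 : ℝ)‖ = 1 := by
      rw [zero_sub, norm_neg, EuclideanSpace.norm_single, norm_one]
    have := hD2Lip 0 0 0 (EuclideanSpace.single (⟨0, hd⟩ : Fin d) (1 : ℝ))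
    rw [sub_self, norm_zero, hx] at this
    have h0 := norm_nonneg (fderiv ℝ (fun v => L 0 v) 0 -
      fderiv ℝ (fun v => L 0 v) (EuclideanSpace.single (⟨0, hd⟩ : Fin d) (1 : ℝ)))
    linarith
  -- pointwise bounds
  have hAbd : ∀ t, ‖fderiv ℝ (fun u => L u (deriv qtil t)) (qtil t) -
      fderiv ℝ (fun u => L u (deriv qbar t)) (qbar t)‖ ≤
      L₁ * (‖qtil t - qbar t‖ + ‖deriv qtil t - deriv qbar t‖) := fun t => hD1Lip _ _ _ _
  have hPbd : ∀ t, ‖ptil t - pbar t‖ ≤ L₂ * (‖qtil t - qbar t‖ + ‖deriv qtil t - deriv qbar t‖) := by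
    intro t; rw [hptil t, hpbar t]; exact hD2Lip _ _ _ _
  -- integrability of the "Lipschitz majorant"
  have hmaj_cont : Continuous (fun t => ‖qtil t - qbar t‖ + ‖deriv qtil t - deriv qbar t‖) :=
    ((hqtil.continuous.sub hqbar.continuous).norm).add ((hq1.sub hq2).norm)
  -- integrability of `φ₁ • (deriv ptil - deriv pbar)`
  have hint1 : IntervalIntegrable (fun t => φ₁ t • (deriv ptil t - deriv pbar t)) MeasureTheory.volume 0 h := by
    apply IntervalIntegrable.mono_fun
      (f := fun t => M * (L₃ * (‖qtil t - qbar t‖ + ‖deriv qtil t - deriv qbar t‖)))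
      (((continuous_const.mul (continuous_const.mul hmaj_cont))).intervalIntegrable 0 h)
    · exact (hφc.aestronglyMeasurable).smul
        (((stronglyMeasurable_deriv ptil).sub (stronglyMeasurable_deriv pbar)).aestronglyMeasurable)
    · filter_upwards [MeasureTheory.ae_restrict_mem measurableSet_uIoc] with t ht
      rw [Set.uIoc_of_le h0h] at ht
      have htIcc : t ∈ Set.Icc (0 : ℝ) h := Set.Ioc_subset_Icc_self ht
      have h1 : ‖φ₁ t • (deriv ptil t - deriv pbar t)‖ =
          |φ₁ t| * ‖deriv ptil t - deriv pbar t‖ := by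
        rw [norm_smul (φ₁ t) (deriv ptil t - deriv pbar t), Real.norm_eq_abs]
      have h2 := hD3Lip t htIcc
      have h3 : 0 ≤ L₃ * (‖qtil t - qbar t‖ + ‖deriv qtil t - deriv qbar t‖) :=
        le_trans (norm_nonneg _) h2
      have h4 : |φ₁ t| * ‖deriv ptil t - deriv pbar t‖ ≤
          M * (L₃ * (‖qtil t - qbar t‖ + ‖deriv qtil t - deriv qbar t‖)) :=
        mul_le_mul (hφle t htIcc) h2 (norm_nonneg _) hM0
      rw [h1]
      exact le_trans h4 (le_abs_self _)
  -- FTC / integration by parts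
  have hFTC : (∫ t in (0:ℝ)..h, (φ₁ t • (deriv ptil t - deriv pbar t) +
      deriv φ₁ t • (ptil t - pbar t))) =
      φ₁ h • (ptil h - pbar h) - φ₁ 0 • (ptil 0 - pbar 0) := by
    apply intervalIntegral.integral_eq_sub_of_hasDerivAt (f := fun t => φ₁ t • (ptil t - pbar t))
    · intro t ht
      rw [Set.uIcc_of_le h0h] at ht
      exact ((hφ₁.differentiable one_ne_zero t).hasDerivAt).smul
        (((hptilDiff t ht).hasDerivAt).sub ((hpbarDiff t ht).hasDerivAt))
    · exact hint1.add ((hφ'c.smul (hptil_cont.sub hpbar_cont)).intervalIntegrable 0 h)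
  -- splitting of Δ
  have hsplit : ∀ t, Δ t =
      (φ₁ t • (fderiv ℝ (fun u => L u (deriv qtil t)) (qtil t) -
          fderiv ℝ (fun u => L u (deriv qbar t)) (qbar t)) -
        φ₁ t • (deriv ptil t - deriv pbar t)) +
      (φ₁ t • (deriv ptil t - deriv pbar t) + deriv φ₁ t • (ptil t - pbar t)) := by
    intro t; rw [hΔ t]; abel
  have hg1int : IntervalIntegrable (fun t =>
      φ₁ t • (fderiv ℝ (fun u => L u (deriv qtil t)) (qtil t) -
          fderiv ℝ (fun u => L u (deriv qbar t)) (qbar t)) -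
        φ₁ t • (deriv ptil t - deriv pbar t)) MeasureTheory.volume 0 h :=
    ((hφc.smul hA_cont).intervalIntegrable 0 h).sub hint1
  have hg2int : IntervalIntegrable (fun t =>
      φ₁ t • (deriv ptil t - deriv pbar t) + deriv φ₁ t • (ptil t - pbar t))
      MeasureTheory.volume 0 h :=
    hint1.add ((hφ'c.smul (hptil_cont.sub hpbar_cont)).intervalIntegrable 0 h)
  have hI : (∫ t in (0:ℝ)..h, Δ t) =
      (∫ t in (0:ℝ)..h, (φ₁ t • (fderiv ℝ (fun u => L u (deriv qtil t)) (qtil t) -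
          fderiv ℝ (fun u => L u (deriv qbar t)) (qbar t)) -
        φ₁ t • (deriv ptil t - deriv pbar t))) +
      (φ₁ h • (ptil h - pbar h) - φ₁ 0 • (ptil 0 - pbar 0)) := by
    rw [← hFTC, ← intervalIntegral.integral_add hg1int hg2int]
    exact intervalIntegral.integral_congr fun t _ => hsplit t
  -- bound on the first integral
  have hI1bd : ‖∫ t in (0:ℝ)..h, (φ₁ t • (fderiv ℝ (fun u => L u (deriv qtil t)) (qtil t) -
          fderiv ℝ (fun u => L u (deriv qbar t)) (qbar t)) -
        φ₁ t • (deriv ptil t - deriv pbar t))‖ ≤ M * (L₁ + L₃) * (W1 + W2) := by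
    have step1 := intervalIntegral.norm_integral_le_integral_norm
      (f := fun t => (φ₁ t • (fderiv ℝ (fun u => L u (deriv qtil t)) (qtil t) -
          fderiv ℝ (fun u => L u (deriv qbar t)) (qbar t)) -
        φ₁ t • (deriv ptil t - deriv pbar t))) (μ := MeasureTheory.volume) h0h
    have step2 : (∫ t in (0:ℝ)..h, ‖φ₁ t • (fderiv ℝ (fun u => L u (deriv qtil t)) (qtil t) -
          fderiv ℝ (fun u => L u (deriv qbar t)) (qbar t)) -
        φ₁ t • (deriv ptil t - deriv pbar t)‖) ≤
        ∫ t in (0:ℝ)..h, (M * (L₁ + L₃)) * (‖qtil t - qbar t‖ + ‖deriv qtil t - deriv qbar t‖) := by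
      rw [intervalIntegral.integral_of_le h0h, intervalIntegral.integral_of_le h0h]
      apply MeasureTheory.integral_mono_of_nonneg
      · exact Filter.Eventually.of_forall fun t => norm_nonneg _
      · exact (continuous_const.mul hmaj_cont).integrableOn_Ioc
      · filter_upwards [MeasureTheory.ae_restrict_mem measurableSet_Ioc] with t ht
        have htIcc : t ∈ Set.Icc (0 : ℝ) h := Set.Ioc_subset_Icc_self ht
        have e1 : ‖φ₁ t • (fderiv ℝ (fun u => L u (deriv qtil t)) (qtil t) -
            fderiv ℝ (fun u => L u (deriv qbar t)) (qbar t)) -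
            φ₁ t • (deriv ptil t - deriv pbar t)‖ ≤
            |φ₁ t| * ‖fderiv ℝ (fun u => L u (deriv qtil t)) (qtil t) -
            fderiv ℝ (fun u => L u (deriv qbar t)) (qbar t)‖ +
            |φ₁ t| * ‖deriv ptil t - deriv pbar t‖ := by
          refine le_trans (norm_sub_le _ _) ?_
          rw [norm_smul (φ₁ t) (fderiv ℝ (fun u => L u (deriv qtil t)) (qtil t) -
              fderiv ℝ (fun u => L u (deriv qbar t)) (qbar t)),
            norm_smul (φ₁ t) (deriv ptil t - deriv pbar t), Real.norm_eq_abs]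
        have b1 : |φ₁ t| * ‖fderiv ℝ (fun u => L u (deriv qtil t)) (qtil t) -
            fderiv ℝ (fun u => L u (deriv qbar t)) (qbar t)‖ ≤
            M * (L₁ * (‖qtil t - qbar t‖ + ‖deriv qtil t - deriv qbar t‖)) :=
          mul_le_mul (hφle t htIcc) (hAbd t) (norm_nonneg _) hM0
        have b2 : |φ₁ t| * ‖deriv ptil t - deriv pbar t‖ ≤
            M * (L₃ * (‖qtil t - qbar t‖ + ‖deriv qtil t - deriv qbar t‖)) :=
          mul_le_mul (hφle t htIcc) (hD3Lip t htIcc) (norm_nonneg _) hM0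
        have := le_trans e1 (add_le_add b1 b2)
        calc ‖φ₁ t • (fderiv ℝ (fun u => L u (deriv qtil t)) (qtil t) -
            fderiv ℝ (fun u => L u (deriv qbar t)) (qbar t)) -
            φ₁ t • (deriv ptil t - deriv pbar t)‖ ≤
            M * (L₁ * (‖qtil t - qbar t‖ + ‖deriv qtil t - deriv qbar t‖)) +
            M * (L₃ * (‖qtil t - qbar t‖ + ‖deriv qtil t - deriv qbar t‖)) := this
          _ = (M * (L₁ + L₃)) * (‖qtil t - qbar t‖ + ‖deriv qtil t - deriv qbar t‖) := by ring
    have step3 : (∫ t in (0:ℝ)..h, (M * (L₁ + L₃)) * (‖qtil t - qbar t‖ + ‖deriv qtil t - deriv qbar t‖)) =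
        M * (L₁ + L₃) * (W1 + W2) := by
      rw [intervalIntegral.integral_const_mul]
      rw [intervalIntegral.integral_add (f := fun t => ‖qtil t - qbar t‖)
        (g := fun t => ‖deriv qtil t - deriv qbar t‖)
        (((hqtil.continuous.sub hqbar.continuous).norm).intervalIntegrable 0 h)
        (((hq1.sub hq2).norm).intervalIntegrable 0 h)]
    calc ‖_‖ ≤ _ := step1
      _ ≤ _ := step2
      _ = _ := step3
  -- bound on the boundary term
  have hBbd : ‖φ₁ h • (ptil h - pbar h) - φ₁ 0 • (ptil 0 - pbar 0)‖ ≤ M * (2 * L₂) * (S1 + S2) := by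
    have e0 : (0:ℝ) ∈ Set.Icc (0:ℝ) h := ⟨le_rfl, h0h⟩
    have eh : h ∈ Set.Icc (0:ℝ) h := ⟨h0h, le_rfl⟩
    have bh : ‖φ₁ h • (ptil h - pbar h)‖ ≤ M * (L₂ * (S1 + S2)) := by
      rw [norm_smul (φ₁ h) (ptil h - pbar h), Real.norm_eq_abs]
      have hb : ‖ptil h - pbar h‖ ≤ L₂ * (S1 + S2) :=
        le_trans (hPbd h) (mul_le_mul_of_nonneg_left (add_le_add (hS1le h eh) (hS2le h eh)) hL₂0)
      exact mul_le_mul (hφle h eh) hb (norm_nonneg _) hM0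
    have b0 : ‖φ₁ 0 • (ptil 0 - pbar 0)‖ ≤ M * (L₂ * (S1 + S2)) := by
      rw [norm_smul (φ₁ 0) (ptil 0 - pbar 0), Real.norm_eq_abs]
      have hb : ‖ptil 0 - pbar 0‖ ≤ L₂ * (S1 + S2) :=
        le_trans (hPbd 0) (mul_le_mul_of_nonneg_left (add_le_add (hS1le 0 e0) (hS2le 0 e0)) hL₂0)
      exact mul_le_mul (hφle 0 e0) hb (norm_nonneg _) hM0
    calc ‖φ₁ h • (ptil h - pbar h) - φ₁ 0 • (ptil 0 - pbar 0)‖ ≤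
        ‖φ₁ h • (ptil h - pbar h)‖ + ‖φ₁ 0 • (ptil 0 - pbar 0)‖ := norm_sub_le _ _
      _ ≤ M * (L₂ * (S1 + S2)) + M * (L₂ * (S1 + S2)) := add_le_add bh b0
      _ = M * (2 * L₂) * (S1 + S2) := by ring
  -- bound on ‖∫ Δ‖
  have hIbd : ‖∫ t in (0:ℝ)..h, Δ t‖ ≤ M * (L₁ + L₃) * (W1 + W2) + M * (2 * L₂) * (S1 + S2) := by
    rw [hI]
    exact le_trans (norm_add_le _ _) (add_le_add hI1bd hBbd)
  -- bound on ‖T‖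
  have hTbd : ‖h • ∑ j, b j • Δ (c j * h)‖ ≤
      (W1 + W2) + (M * (L₁ + L₃) * (W1 + W2) + M * (2 * L₂) * (S1 + S2)) := by
    have : ‖h • ∑ j, b j • Δ (c j * h)‖ ≤
        ‖(h • ∑ j, b j • Δ (c j * h)) - ∫ t in (0:ℝ)..h, Δ t‖ + ‖∫ t in (0:ℝ)..h, Δ t‖ := by
      have h' := norm_add_le ((h • ∑ j, b j • Δ (c j * h)) - ∫ t in (0:ℝ)..h, Δ t)
        (∫ t in (0:ℝ)..h, Δ t)
      rwa [sub_add_cancel] at h'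
    refine le_trans this (add_le_add (le_trans hη hηN) hIbd)
  -- conclude
  have hfin : ‖h • ∑ j, b j • Δ (c j * h)‖ ≤ (K * M + 1) * ((W1 + W2) + S1 + S2) := by
    have h1 : (L₁ + L₃) ≤ K := le_max_left _ _
    have h2 : 2 * L₂ ≤ K := le_max_right _ _
    nlinarith [mul_le_mul_of_nonneg_right h1 (mul_nonneg hM0 (add_nonneg hW10 hW20)),
      mul_le_mul_of_nonneg_right h2 (mul_nonneg hM0 (add_nonneg hS10 hS20)), hTbd]
  calc |(h • ∑ j, b j • Δ (c j * h)) a| = ‖(h • ∑ j, b j • Δ (c j * h)) a‖ := (Real.norm_eq_abs _).symm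
    _ ≤ ‖h • ∑ j, b j • Δ (c j * h)‖ * ‖a‖ := ContinuousLinearMap.le_opNorm _ _
    _ ≤ ((K * M + 1) * ((W1 + W2) + S1 + S2)) * ‖a‖ :=
        mul_le_mul_of_nonneg_right hfin (norm_nonneg _)
    _ = (K * M + 1) * ‖a‖ * ((W1 + W2) + S1 + S2) := by ring
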